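/- arXiv:2205.03933 — 2 statements merged into one kernel-verified Lean document; each statement's English description precedes it below -/
import Mathlib

section
/- Let Σ be a finite alphabet of size q ≥ 2 and let n, L_min, L_over be positive integers with n ≥ L_min > L_over ≥ 1. Then the set rf_{L_over}(n) of L_over-repeat-free strings of length n is an (L_min, L_over)-trace code: for all distinct x_1, x_2 ∈ rf_{L_over}(n), the trace spectra T_{L_min}^{L_over}(x_1) and T_{L_min}^{L_over}(x_2) are disjoint. -/
/-- The `ℓ`-substring of `x` at location `i`: `(x_i, x_{i+1}, …, x_{i+ℓ-1})`. -/
def substr {α : Type*} (x : List α) (i ℓ : ℕ) : List α := (x.drop i).take ℓ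

/-- `x` is `ℓ`-repeat-free: no `ℓ`-substring occurs at two distinct locations. -/
def RepeatFree {α : Type*} (ℓ : ℕ) (x : List α) : Prop :=
  ∀ i j : ℕ, i < j → j + ℓ ≤ x.length → substr x i ℓ ≠ substr x j ℓ

/-- `T` is an `(Lmin, Lover)`-trace of `x`: a multiset of substrings of `x` taken at
strictly increasing locations, starting at location `0`, ending flush with the end of `x`,
each of length at least `Lmin`, and with consecutive substrings overlapping in at least
`Lover` positions. -/
def IsTrace {α : Type*} (Lmin Lover : ℕ) (x : List α) (T : Multiset (List α)) : Prop :=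
  ∃ P : List (ℕ × ℕ),
    P ≠ [] ∧
    (∀ p ∈ P, Lmin ≤ p.2 ∧ p.1 + p.2 ≤ x.length) ∧
    P.Chain' (fun a b => a.1 < b.1 ∧ b.1 + Lover ≤ a.1 + a.2) ∧
    (∃ p ∈ P.head?, p.1 = 0) ∧
    (∃ p ∈ P.getLast?, p.1 + p.2 = x.length) ∧
    T = ↑(P.map fun p => substr x p.1 p.2)

/-- The `(Lmin, Lover)`-trace spectrum of `x`: the set of all its `(Lmin, Lover)`-traces. -/
def traceSpectrum {α : Type*} (Lmin Lover : ℕ) (x : List α) : Set (Multiset (List α)) :=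
  {T | IsTrace Lmin Lover x T}

private lemma substr_len {α : Type*} (x : List α) (i ℓ : ℕ) (h : i + ℓ ≤ x.length) :
    (substr x i ℓ).length = ℓ := by simp [substr]; omega

private lemma substr_substr {α : Type*} (x : List α) (i ℓ j m : ℕ) (h : j + m ≤ ℓ) :
    substr (substr x i ℓ) j m = substr x (i+j) m := by
  simp only [substr, List.drop_take, List.drop_drop, List.take_take]
  congr 1
  omega

private lemma substr_getElem? {α : Type*} (x : List α) (i ℓ k : ℕ) (h : k < ℓ) :
    (substr x i ℓ)[k]? = x[i+k]? := by
  simp [substr, List.getElem?_take, h, List.getElem?_drop]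

private lemma rf_unique {α : Type*} {ℓ : ℕ} {x : List α} (h : RepeatFree ℓ x)
    {a b : ℕ} (ha : a + ℓ ≤ x.length) (hb : b + ℓ ≤ x.length)
    (heq : substr x a ℓ = substr x b ℓ) : a = b := by
  rcases lt_trichotomy a b with h1 | h1 | h1
  · exact absurd heq (h a b h1 hb)
  · exact h1
  · exact absurd heq.symm (h b a h1 ha)

theorem repeat_free_is_trace_code
    {α : Type*} [Fintype α] {q : ℕ} (hcard : Fintype.card α = q) (hq : 2 ≤ q)
    (n Lmin Lover : ℕ) (hn : Lmin ≤ n) (hLmin : Lover < Lmin) (hLover : 1 ≤ Lover)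
    (x₁ x₂ : List α) (hx₁ : x₁.length = n) (hx₂ : x₂.length = n)
    (hrf₁ : RepeatFree Lover x₁) (hrf₂ : RepeatFree Lover x₂) (hne : x₁ ≠ x₂) :
    traceSpectrum Lmin Lover x₁ ∩ traceSpectrum Lmin Lover x₂ = ∅ := by
  rw [Set.eq_empty_iff_forall_notMem]
  rintro T ⟨⟨P₁, hP₁ne, hP₁b, hP₁c, -, -, hT₁⟩,
            ⟨P₂, hP₂ne, hP₂b, hP₂c, ⟨p₀, hp₀head, hp₀1⟩, ⟨pl, hplast, hpl⟩, hT₂⟩⟩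
  apply hne
  -- the two traces are permutations of each other
  have hperm : (P₁.map fun p => substr x₁ p.1 p.2).Perm
      (P₂.map fun p => substr x₂ p.1 p.2) := by
    rw [← Multiset.coe_eq_coe, ← hT₁, ← hT₂]
  -- existence of an occurrence in x₁ of each segment of the trace of x₂
  have hex : ∀ p ∈ P₂, ∃ i, substr x₂ p.1 p.2 = substr x₁ i p.2 ∧ i + p.2 ≤ n := by
    intro p hp
    have hmem : substr x₂ p.1 p.2 ∈ P₁.map fun p => substr x₁ p.1 p.2 := by
      rw [hperm.mem_iff]
      exact List.mem_map_of_mem hp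
    obtain ⟨p', hp', he⟩ := List.mem_map.mp hmem
    have hb' := hP₁b p' hp'
    have hb := hP₂b p hp
    have hlen : p'.2 = p.2 := by
      have := congrArg List.length he
      rwa [substr_len x₁ _ _ (by omega), substr_len x₂ _ _ (by omega)] at this
    refine ⟨p'.1, ?_, by omega⟩
    rw [← he, hlen]
  -- uniqueness of occurrence positions (repeat-freeness of x₁)
  have huni : ∀ p ∈ P₂, ∀ i i' : ℕ,
      (substr x₂ p.1 p.2 = substr x₁ i p.2 ∧ i + p.2 ≤ n) →
      (substr x₂ p.1 p.2 = substr x₁ i' p.2 ∧ i' + p.2 ≤ n) → i = i' := by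
    intro p hp i i' hQ hQ'
    have hb := hP₂b p hp
    have h1 := substr_substr x₁ i p.2 0 Lover (by omega)
    have h2 := substr_substr x₁ i' p.2 0 Lover (by omega)
    rw [← hQ.1] at h1
    rw [← hQ'.1] at h2
    have : substr x₁ (i + 0) Lover = substr x₁ (i' + 0) Lover := h1.symm.trans h2
    have := rf_unique hrf₁ (by omega) (by omega) this
    omega
  -- step along the chain: overlaps pin down relative positions
  have hstep : ∀ p p' : ℕ × ℕ, p ∈ P₂ → p' ∈ P₂ →
      (p.1 < p'.1 ∧ p'.1 + Lover ≤ p.1 + p.2) → ∀ i i' : ℕ,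
      (substr x₂ p.1 p.2 = substr x₁ i p.2 ∧ i + p.2 ≤ n) →
      (substr x₂ p'.1 p'.2 = substr x₁ i' p'.2 ∧ i' + p'.2 ≤ n) →
      i' + p.1 = i + p'.1 := by
    intro p p' hp hp' hR i i' hQ hQ'
    have hb := hP₂b p hp
    have hb' := hP₂b p' hp'
    have e1 : substr x₂ p'.1 Lover = substr x₁ (i + (p'.1 - p.1)) Lover := by
      calc substr x₂ p'.1 Lover
          = substr (substr x₂ p.1 p.2) (p'.1 - p.1) Lover := by
            rw [substr_substr x₂ p.1 p.2 (p'.1 - p.1) Lover (by omega)]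
            congr 1; omega
        _ = substr (substr x₁ i p.2) (p'.1 - p.1) Lover := by rw [hQ.1]
        _ = substr x₁ (i + (p'.1 - p.1)) Lover :=
            substr_substr x₁ i p.2 (p'.1 - p.1) Lover (by omega)
    have e2 : substr x₂ p'.1 Lover = substr x₁ i' Lover := by
      calc substr x₂ p'.1 Lover
          = substr (substr x₂ p'.1 p'.2) 0 Lover := by
            rw [substr_substr x₂ p'.1 p'.2 0 Lover (by omega), Nat.add_zero]
        _ = substr (substr x₁ i' p'.2) 0 Lover := by rw [hQ'.1]
        _ = substr x₁ (i' + 0) Lover := substr_substr x₁ i' p'.2 0 Lover (by omega)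
        _ = substr x₁ i' Lover := by rw [Nat.add_zero]
    have := rf_unique hrf₁ (by omega) (by omega) (e2.symm.trans e1)
    omega
  -- propagate along the chain
  have hchain : ∀ L : List (ℕ × ℕ), (∀ p ∈ L, p ∈ P₂) →
      L.Chain' (fun a b => a.1 < b.1 ∧ b.1 + Lover ≤ a.1 + a.2) →
      ∀ a i₀, L.head? = some a →
      (substr x₂ a.1 a.2 = substr x₁ i₀ a.2 ∧ i₀ + a.2 ≤ n) →
      ∀ p ∈ L, ∀ i : ℕ,
      (substr x₂ p.1 p.2 = substr x₁ i p.2 ∧ i + p.2 ≤ n) →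
      i + a.1 = i₀ + p.1 := by
    intro L
    induction L with
    | nil => intro _ _ a i₀ h; simp at h
    | cons a L' ih =>
      intro hsub hch c i₀ hhead hQ0 p hp i hQ
      rw [List.head?_cons, Option.some_inj] at hhead
      obtain rfl : c = a := hhead.symm
      rcases List.mem_cons.mp hp with rfl | hp'
      · have := huni p (hsub p (by simp)) i i₀ hQ hQ0
        omega
      · cases L' with
        | nil => simp at hp'
        | cons b L'' =>
          obtain ⟨ib, hQb⟩ := hex b (hsub b (by simp))
          have hcc := List.isChain_cons_cons.mp hch
          have h1 := hstep c b (hsub c (by simp)) (hsub b (by simp)) hcc.1 i₀ ib hQ0 hQb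
          have h2 := ih (fun q hq => hsub q (by simp [hq])) hcc.2 b ib rfl hQb p hp' i hQ
          omega
  -- the head of P₂ occurs at position 0 in x₁; hence every segment occurs at its own position
  rw [Option.mem_def] at hp₀head hplast
  have hp₀mem : p₀ ∈ P₂ := List.mem_of_mem_head? hp₀head
  have hplmem : pl ∈ P₂ := List.mem_of_mem_getLast? hplast
  obtain ⟨i₀, hQ0⟩ := hex p₀ hp₀mem
  obtain ⟨il, hQl⟩ := hex pl hplmem
  have hl1 := hchain P₂ (fun _ h => h) hP₂c p₀ i₀ hp₀head hQ0 pl hplmem il hQl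
  have hi₀ : i₀ = 0 := by
    have h1 : pl.1 + pl.2 = n := by rw [hpl, hx₂]
    have h2 : il + pl.2 ≤ n := hQl.2
    omega
  have hfinal : ∀ p ∈ P₂, substr x₂ p.1 p.2 = substr x₁ p.1 p.2 := by
    intro p hp
    obtain ⟨i, hQ⟩ := hex p hp
    have := hchain P₂ (fun _ h => h) hP₂c p₀ i₀ hp₀head hQ0 p hp i hQ
    have hi : i = p.1 := by omega
    rw [hi] at hQ
    exact hQ.1
  -- coverage: every position below n is covered by some segment of P₂
  have hcov : ∀ L : List (ℕ × ℕ), L ≠ [] →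
      L.Chain' (fun a b => a.1 < b.1 ∧ b.1 + Lover ≤ a.1 + a.2) →
      ∀ t : ℕ, (∀ a, L.head? = some a → a.1 ≤ t) →
      (∀ b, L.getLast? = some b → t < b.1 + b.2) →
      ∃ p ∈ L, p.1 ≤ t ∧ t < p.1 + p.2 := by
    intro L
    induction L with
    | nil => intro h; exact absurd rfl h
    | cons a L' ih =>
      intro _ hch t hhead hlast
      have ha : a.1 ≤ t := hhead a rfl
      by_cases hlt : t < a.1 + a.2
      · exact ⟨a, by simp, ha, hlt⟩
      · cases L' with
        | nil => exact absurd (hlast a rfl) hlt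
        | cons b L'' =>
          have hcc := List.isChain_cons_cons.mp hch
          obtain ⟨p, hp, h⟩ := ih (by simp) hcc.2 t
            (by intro c hc; rw [List.head?_cons, Option.some_inj] at hc; subst hc; omega)
            (by intro c hc; exact hlast c (by rwa [List.getLast?_cons_cons]))
          exact ⟨p, by simp [hp], h⟩
  -- conclude x₁ = x₂ pointwise
  apply List.ext_getElem?
  intro t
  by_cases ht : t < n
  · obtain ⟨p, hp, h1, h2⟩ := hcov P₂ hP₂ne hP₂c t
      (by intro c hc; rw [hp₀head, Option.some_inj] at hc; subst hc; omega)
      (by intro c hc; rw [hplast, Option.some_inj] at hc; subst hc; omega)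
    have hsub := hfinal p hp
    have e1 : (substr x₁ p.1 p.2)[t - p.1]? = x₁[p.1 + (t - p.1)]? :=
      substr_getElem? x₁ p.1 p.2 (t - p.1) (by omega)
    have e2 : (substr x₂ p.1 p.2)[t - p.1]? = x₂[p.1 + (t - p.1)]? :=
      substr_getElem? x₂ p.1 p.2 (t - p.1) (by omega)
    have hpt : p.1 + (t - p.1) = t := by omega
    rw [hpt] at e1 e2
    rw [← e1, ← e2, hsub]
  · rw [List.getElem?_eq_none (by omega), List.getElem?_eq_none (by omega)]
end

section
/- Let Σ be a finite alphabet of size q ≥ 2, and let n, L_min, L_over be positive integers with n ≥ L_min > L_over ≥ 1, (L_min − L_over) dividing (n − L_min), and q^{L_min} ≥ ⌈n/(L_min − L_over)⌉. Then every (L_min, L_over)-trace code C ⊆ Σ^n satisfies log_q |C| ≤ ⌈n/(L_min − L_over)⌉ · (2 log_q e + L_min − log_q ⌈n/(L_min − L_over)⌉). -/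
/-- `C` is an `(Lmin, Lover)`-trace code: distinct codewords have disjoint trace spectra. -/
def IsTraceCode {α : Type*} (Lmin Lover : ℕ) (C : Set (List α)) : Prop :=
  ∀ x₁ ∈ C, ∀ x₂ ∈ C, x₁ ≠ x₂ →
    traceSpectrum Lmin Lover x₁ ∩ traceSpectrum Lmin Lover x₂ = ∅


private lemma pow_le_exp_mul_factorial' (t : ℕ) : (t:ℝ)^t ≤ Real.exp 1 ^ t * t.factorial := by
  have h := Real.sum_le_exp_of_nonneg (x := (t:ℝ)) (by positivity) (t+1)
  have hterm : (t:ℝ)^t / t.factorial ≤ ∑ i ∈ Finset.range (t+1), (t:ℝ)^i / i.factorial :=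
    Finset.single_le_sum (f := fun i => (t:ℝ)^i / (i.factorial:ℝ))
      (fun i _ => by positivity) (Finset.self_mem_range_succ t)
  have hf : (0:ℝ) < t.factorial := by positivity
  have hh := hterm.trans h
  rw [div_le_iff₀ hf] at hh
  calc (t:ℝ)^t ≤ Real.exp t * t.factorial := hh
    _ = Real.exp 1 ^ t * t.factorial := by rw [← Real.exp_nat_mul, mul_one]

private lemma key_real (q L t K M : ℕ) (hq : 2 ≤ q) (ht : 1 ≤ t) (htK : t ≤ K)
    (hKN : K ≤ q^L) (hM : M ≤ (q^L + t - 1).choose t) :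
    Real.logb q M ≤ K * (2*Real.logb q (Real.exp 1) + L - Real.logb q K) := by
  have hK1 : 1 ≤ K := le_trans ht htK
  have hq1 : (1:ℝ) < (q:ℕ) := by exact_mod_cast hq.trans_lt' one_lt_two
  have hlq : 0 < Real.log q := Real.log_pos hq1
  have hbe : Real.logb q (Real.exp 1) = 1 / Real.log q := by
    simp [Real.logb, Real.log_exp]
  have hbe0 : 0 < Real.logb q (Real.exp 1) := by rw [hbe]; positivity
  have hK0 : (0:ℝ) < (K:ℕ) := by exact_mod_cast hK1
  have ht0 : (0:ℝ) < (t:ℕ) := by exact_mod_cast ht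
  have hKL : Real.logb q K ≤ L := by
    calc Real.logb q K ≤ Real.logb q ((q:ℝ)^L) :=
          Real.logb_le_logb_of_le hq1 hK0 (by exact_mod_cast hKN)
      _ = L := by rw [Real.logb_pow, Real.logb_self_eq_one hq1, mul_one]
  have h2e : Real.logb q 2 ≤ Real.logb q (Real.exp 1) := by
    apply Real.logb_le_logb_of_le hq1 (by norm_num)
    have := Real.add_one_le_exp 1
    linarith
  have hlog2 : (0:ℝ) ≤ Real.logb q 2 := Real.logb_nonneg hq1 (by norm_num)
  rcases Nat.eq_zero_or_pos M with h0 | hM1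
  · rw [h0]
    simp only [Nat.cast_zero, Real.logb_zero]
    have : (0:ℝ) ≤ 2*Real.logb q (Real.exp 1) + L - Real.logb q K := by
      have : (0:ℝ) ≤ (L:ℕ) - Real.logb q K := by linarith
      linarith
    positivity
  · set N' : ℕ := q^L + t - 1 with hN'
    have hN'pos : 0 < N' := by
      have : 1 ≤ q^L := Nat.one_le_pow _ _ (by omega)
      omega
    set A : ℝ := Real.exp 1 * (N':ℝ) / t with hA
    have hchoose : ((N'.choose t : ℕ):ℝ) ≤ A ^ t := by
      have h1 : (N'.choose t : ℝ) * (t.factorial:ℝ) ≤ (N':ℝ)^t := by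
        have := Nat.descFactorial_le_pow N' t
        rw [Nat.descFactorial_eq_factorial_mul_choose] at this
        exact_mod_cast (by rw [mul_comm]; exact_mod_cast this : N'.choose t * t.factorial ≤ N'^t)
      have h2 := pow_le_exp_mul_factorial' t
      have hApow : A^t = Real.exp 1 ^ t * (N':ℝ)^t / (t:ℝ)^t := by
        rw [hA, div_pow, mul_pow]
      rw [hApow, le_div_iff₀ (by positivity)]
      have hf : (0:ℝ) < t.factorial := by positivity
      have c1 : (N'.choose t:ℝ) * (t:ℝ)^t ≤ (N'.choose t:ℝ) * (Real.exp 1 ^ t * t.factorial) := by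
        apply mul_le_mul_of_nonneg_left h2 (by positivity)
      have c2 : (N'.choose t:ℝ) * (Real.exp 1 ^ t * t.factorial)
          = ((N'.choose t:ℝ) * t.factorial) * Real.exp 1 ^ t := by ring
      have c3 : ((N'.choose t:ℝ) * t.factorial) * Real.exp 1 ^ t ≤ (N':ℝ)^t * Real.exp 1 ^ t := by
        apply mul_le_mul_of_nonneg_right h1 (by positivity)
      calc (N'.choose t:ℝ) * (t:ℝ)^t ≤ (N':ℝ)^t * Real.exp 1 ^ t := by
            rw [← c2] at c3; exact c1.trans c3
        _ = Real.exp 1 ^ t * (N':ℝ)^t := by ring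
    have hM0 : (0:ℝ) < (M:ℕ) := by exact_mod_cast hM1
    have step1 : Real.logb q M ≤ Real.logb q (A^t) := by
      apply Real.logb_le_logb_of_le hq1 hM0
      calc (M:ℝ) ≤ ((N'.choose t : ℕ):ℝ) := by exact_mod_cast hM
        _ ≤ A^t := hchoose
    have hN'0 : (0:ℝ) < (N':ℕ) := by exact_mod_cast hN'pos
    have step2 : Real.logb q (A^t) = t * Real.logb q A := Real.logb_pow _ _ _
    have step3 : Real.logb q A
        = Real.logb q (Real.exp 1) + Real.logb q N' - Real.logb q t := by
      rw [hA, Real.logb_div (by positivity) (by positivity),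
        Real.logb_mul (by positivity) (by positivity)]
    have hN2 : (N':ℝ) ≤ 2 * (q:ℝ)^L := by
      have : N' ≤ 2 * q^L := by
        have := htK.trans hKN
        omega
      exact_mod_cast this
    have step4 : Real.logb q N' ≤ Real.logb q 2 + L := by
      calc Real.logb q N' ≤ Real.logb q (2 * (q:ℝ)^L) :=
            Real.logb_le_logb_of_le hq1 hN'0 hN2
        _ = Real.logb q 2 + L := by
            rw [Real.logb_mul (by norm_num) (by positivity), Real.logb_pow,
              Real.logb_self_eq_one hq1, mul_one]
    -- abbreviations
    set be := Real.logb q (Real.exp 1)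
    set b2 := Real.logb q 2
    set bK := Real.logb q (K:ℕ)
    set bt := Real.logb q (t:ℕ)
    have hbt0 : 0 ≤ bt := Real.logb_nonneg hq1 (by exact_mod_cast ht)
    have step5 : Real.logb q M ≤ t * (be + b2 + (L:ℕ) - bt) := by
      rw [step2, step3] at step1
      have : Real.logb q (Real.exp 1) + Real.logb q (N':ℕ) - bt ≤ be + b2 + (L:ℕ) - bt := by
        linarith [step4]
      calc Real.logb q M ≤ t * (Real.logb q (Real.exp 1) + Real.logb q (N':ℕ) - bt) := step1
        _ ≤ t * (be + b2 + (L:ℕ) - bt) := by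
            apply mul_le_mul_of_nonneg_left this (by positivity)
    -- monotone step
    have hf2 : (t:ℝ) * (bK - bt) ≤ ((K:ℝ) - t) * be := by
      have hlogle : Real.log ((K:ℝ)/t) ≤ (K:ℝ)/t - 1 :=
        Real.log_le_sub_one_of_pos (by positivity)
      have h' : (t:ℝ) * Real.log ((K:ℝ)/(t:ℝ)) ≤ (K:ℝ) - t := by
        have e1 : (t:ℝ) * ((K:ℝ)/t - 1) = (K:ℝ) - t := by field_simp
        nlinarith [mul_le_mul_of_nonneg_left hlogle (le_of_lt ht0)]
      have e2 : bK - bt = Real.log ((K:ℝ)/t) / Real.log q := by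
        rw [Real.log_div (ne_of_gt hK0) (ne_of_gt ht0)]
        simp only [bK, bt, Real.logb]
        ring
      rw [e2, hbe, mul_div_assoc', mul_one_div]
      gcongr
    have htKr : (t:ℝ) ≤ (K:ℝ) := by exact_mod_cast htK
    have prod1 : 0 ≤ ((K:ℝ) - t) * ((L:ℕ) - bK) := by
      apply mul_nonneg <;> linarith
    have prod2 : 0 ≤ ((K:ℝ) - t) * b2 := by
      apply mul_nonneg <;> linarith
    have prod3 : 0 ≤ (K:ℝ) * (be - b2) := by
      apply mul_nonneg <;> linarith
    have final : (t:ℝ) * (be + b2 + (L:ℕ) - bt) ≤ (K:ℝ) * (2*be + (L:ℕ) - bK) := by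
      linarith [hf2, prod1, prod2, prod3]
    linarith [step5, final]

private lemma isTrace_canonical {α : Type*} (Lmin Lover m : ℕ) (x : List α)
    (hL : Lover < Lmin) (hlen : x.length = Lmin + (Lmin - Lover) * m) :
    IsTrace Lmin Lover x
      ↑((List.range (m+1)).map fun i => substr x (i*(Lmin-Lover)) Lmin) := by
  have hcm : m * (Lmin - Lover) = (Lmin - Lover) * m := Nat.mul_comm _ _
  refine ⟨(List.range (m+1)).map fun i => (i*(Lmin-Lover), Lmin), ?_, ?_, ?_, ?_, ?_, ?_⟩
  · simp
  · intro p hp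
    simp only [List.mem_map, List.mem_range] at hp
    obtain ⟨i, hi, rfl⟩ := hp
    have h1 : i * (Lmin - Lover) ≤ m * (Lmin - Lover) :=
      Nat.mul_le_mul_right _ (by omega)
    simp only [hlen]
    omega
  · rw [List.Chain', List.isChain_map, List.isChain_range_succ]
    intro i hi
    have h2 : (Nat.succ i)*(Lmin-Lover) = i*(Lmin-Lover) + (Lmin-Lover) := Nat.succ_mul _ _
    constructor
    · simp only
      omega
    · simp only
      omega
  · rw [List.range_succ_eq_map]
    simp
  · rw [List.range_succ, List.map_append]
    simp only [List.map_cons, List.map_nil, List.getLast?_concat]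
    exact ⟨_, rfl, by simp only [hlen]; omega⟩
  · rw [List.map_map]
    rfl

theorem trace_code_log_size_bound
    {α : Type*} [Fintype α] {q : ℕ} (hcard : Fintype.card α = q) (hq : 2 ≤ q)
    (n Lmin Lover : ℕ) (hn : Lmin ≤ n) (hLmin : Lover < Lmin) (hLover : 1 ≤ Lover)
    (hdvd : (Lmin - Lover) ∣ (n - Lmin))
    (hbig : (n + (Lmin - Lover) - 1) / (Lmin - Lover) ≤ q ^ Lmin)
    (C : Finset (List α)) (hlen : ∀ x ∈ C, x.length = n)
    (hcode : IsTraceCode Lmin Lover (↑C : Set (List α))) :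
    Real.logb q (C.card) ≤
      ((n + (Lmin - Lover) - 1) / (Lmin - Lover) : ℕ) *
        (2 * Real.logb q (Real.exp 1) + Lmin -
          Real.logb q (((n + (Lmin - Lover) - 1) / (Lmin - Lover) : ℕ))) := by
  classical
  have hα : Nonempty α := Fintype.card_pos_iff.mp (by omega)
  obtain ⟨a0⟩ := hα
  obtain ⟨m, hm⟩ := hdvd
  have hnlen : n = Lmin + (Lmin - Lover) * m := by omega
  set t := m + 1 with ht
  -- padding map into vectors
  have hpadlen : ∀ l : List α, ((l ++ List.replicate Lmin a0).take Lmin).length = Lmin := by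
    intro l
    simp [List.length_take]
  let pad : List α → List.Vector α Lmin := fun l =>
    ⟨(l ++ List.replicate Lmin a0).take Lmin, hpadlen l⟩
  have pad_toList : ∀ l : List α, l.length = Lmin → (pad l).toList = l := by
    intro l hl
    show (l ++ _).take Lmin = l
    rw [← hl, List.take_left]
  let g : List α → Sym (List.Vector α Lmin) t := fun x =>
    ⟨((List.range t).map fun i => pad (substr x (i*(Lmin - Lover)) Lmin) : List _), by
      simp⟩
  have hsub_len : ∀ x ∈ C, ∀ i, i < t → (substr x (i*(Lmin-Lover)) Lmin).length = Lmin := by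
    intro x hx i hi
    have h1 : i * (Lmin - Lover) ≤ m * (Lmin - Lover) := Nat.mul_le_mul_right _ (by omega)
    have h2 : m * (Lmin - Lover) = (Lmin - Lover) * m := Nat.mul_comm _ _
    simp only [substr, List.length_take, List.length_drop, hlen x hx]
    omega
  have hinj : Set.InjOn g C := by
    intro x₁ hx₁ x₂ hx₂ hg
    by_contra hne
    have hmul := congrArg Subtype.val hg
    simp only [g] at hmul
    have hmap : ∀ x ∈ C,
        Multiset.map List.Vector.toList
            (↑((List.range t).map fun i => pad (substr x (i*(Lmin - Lover)) Lmin)) : Multiset (List.Vector α Lmin))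
          = (↑((List.range t).map fun i => substr x (i*(Lmin - Lover)) Lmin) : Multiset (List α)) := by
      intro x hx
      rw [Multiset.map_coe, List.map_map]
      congr 1
      apply List.map_congr_left
      intro i hi
      simp only [Function.comp_apply]
      exact pad_toList _ (hsub_len x hx i (List.mem_range.mp hi))
    have hT : (↑((List.range t).map fun i => substr x₁ (i*(Lmin - Lover)) Lmin) : Multiset (List α))
        = (↑((List.range t).map fun i => substr x₂ (i*(Lmin - Lover)) Lmin) : Multiset (List α)) := by
      rw [← hmap x₁ hx₁, ← hmap x₂ hx₂]
      exact congrArg _ hmul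
    have h1 : IsTrace Lmin Lover x₁
        ↑((List.range t).map fun i => substr x₁ (i*(Lmin-Lover)) Lmin) :=
      isTrace_canonical Lmin Lover m x₁ hLmin (by rw [hlen x₁ hx₁]; exact hnlen)
    have h2 : IsTrace Lmin Lover x₂
        ↑((List.range t).map fun i => substr x₂ (i*(Lmin-Lover)) Lmin) :=
      isTrace_canonical Lmin Lover m x₂ hLmin (by rw [hlen x₂ hx₂]; exact hnlen)
    have hdisj := hcode x₁ hx₁ x₂ hx₂ hne
    have hmem : (↑((List.range t).map fun i => substr x₁ (i*(Lmin-Lover)) Lmin) : Multiset _)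
        ∈ traceSpectrum Lmin Lover x₁ ∩ traceSpectrum Lmin Lover x₂ := by
      constructor
      · exact h1
      · show IsTrace Lmin Lover x₂ _
        rw [hT]
        exact h2
    rw [hdisj] at hmem
    exact hmem
  have hcount : C.card ≤ Fintype.card (Sym (List.Vector α Lmin) t) := by
    rw [← Finset.card_univ]
    exact Finset.card_le_card_of_injOn g (fun x _ => Finset.mem_univ _) hinj
  rw [Sym.card_sym_eq_choose, card_vector, hcard] at hcount
  have htK : t ≤ (n + (Lmin - Lover) - 1) / (Lmin - Lover) := by
    rw [Nat.le_div_iff_mul_le (by omega : 0 < Lmin - Lover)]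
    have e1 : t * (Lmin - Lover) = m * (Lmin - Lover) + (Lmin - Lover) := by rw [ht]; ring
    have e2 : m * (Lmin - Lover) = (Lmin - Lover) * m := Nat.mul_comm _ _
    omega
  exact key_real q Lmin t ((n + (Lmin - Lover) - 1) / (Lmin - Lover)) C.card
    hq (by omega) htK hbig hcount
end
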